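/- Let n = m·2^s with m odd and s ≥ 1, let f₀, f₁, f₂, f₃, f₄, f₅ be monic polynomials in F₂[x] with f_i | f₀ for all i and f₀ | (xⁿ−1), and let C be the cyclic code of length n over R given by the ideal of R[x]/(xⁿ−1) generated by f₀, uf₁, u²f₂, u³f₃, u⁴f₄, u⁵f₅ (coefficients embedded via F₂ ↪ R). If the codeword α(1+x+⋯+x^{n−1}) belongs to C and every f_i is self-reciprocal, then C is a reverse-complement code. -/

import Mathlib

open Polynomial

/-- The ring `R = F₂[u]/(u⁶)`. -/
abbrev R : Type := AdjoinRoot (X ^ 6 : (ZMod 2)[X])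

/-- `u ∈ R`, the image of `X`. -/
noncomputable def u : R := AdjoinRoot.root _

/-- `α = u⁵ + u⁴ + u³ + u² + u + 1`, so that the complement of `x ∈ R` is `x + α`. -/
noncomputable def alpha : R := u ^ 5 + u ^ 4 + u ^ 3 + u ^ 2 + u + 1

/-- Reverse-complement of a vector: `(c₀, …, c_{n-1}) ↦ (ĉ_{n-1}, …, ĉ₀)` with `x̂ = x + α`. -/
noncomputable def rcomp {n : ℕ} (c : Fin n → R) : Fin n → R := fun j => c j.rev + alpha

/-- Lift a binary polynomial to a polynomial over `R` via `F₂ ↪ R`. -/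
noncomputable def rmap (f : (ZMod 2)[X]) : R[X] := f.map (algebraMap (ZMod 2) R)

/-- The quotient map `R[x] → R[x]/(xⁿ - 1)`. -/
noncomputable def mkq (n : ℕ) : R[X] →+* R[X] ⧸ Ideal.span ({(X : R[X]) ^ n - 1} : Set R[X]) :=
  Ideal.Quotient.mk _

/-- The cyclic code of length `n` over `R` given (as a set of coefficient vectors) by the
ideal of `R[x]/(xⁿ - 1)` generated by `f₀, u f₁, u² f₂, u³ f₃, u⁴ f₄, u⁵ f₅`. -/
noncomputable def cyclicCode (n : ℕ) (f₀ f₁ f₂ f₃ f₄ f₅ : (ZMod 2)[X]) :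
    Set (Fin n → R) :=
  {c | mkq n (∑ i : Fin n, Polynomial.C (c i) * X ^ (i : ℕ)) ∈
    Ideal.span ({mkq n (rmap f₀), mkq n (Polynomial.C u * rmap f₁),
      mkq n (Polynomial.C (u ^ 2) * rmap f₂), mkq n (Polynomial.C (u ^ 3) * rmap f₃),
      mkq n (Polynomial.C (u ^ 4) * rmap f₄), mkq n (Polynomial.C (u ^ 5) * rmap f₅)} :
        Set (R[X] ⧸ Ideal.span ({(X : R[X]) ^ n - 1} : Set R[X])))}


instance : Nontrivial R := AdjoinRoot.nontrivial _ (by rw [degree_X_pow]; decide)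

lemma mkq_X_pow (n : ℕ) : (mkq n X) ^ n = 1 := by
  have h : mkq n (X ^ n - 1) = 0 :=
    Ideal.Quotient.eq_zero_iff_mem.2 (Ideal.subset_span rfl)
  have := sub_eq_zero.mp (by simpa [map_sub, map_pow] using h)
  simpa using this

/-- the ring hom `R[X] → R[X]/(Xⁿ-1)` sending `X` to `X^{n-1}`. -/
noncomputable def psi (n : ℕ) : R[X] →+* R[X] ⧸ Ideal.span ({(X : R[X]) ^ n - 1} : Set R[X]) :=
  eval₂RingHom ((mkq n).comp C) ((mkq n X) ^ (n - 1))

lemma psi_ker (n : ℕ) : ∀ a ∈ Ideal.span ({(X : R[X]) ^ n - 1} : Set R[X]), psi n a = 0 := by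
  intro a ha
  rw [Ideal.mem_span_singleton] at ha
  obtain ⟨q, rfl⟩ := ha
  rw [map_mul]
  have : psi n (X ^ n - 1) = 0 := by
    simp only [psi, map_sub, map_pow, map_one, coe_eval₂RingHom, eval₂_X]
    rw [← pow_mul, mul_comm, pow_mul, mkq_X_pow, one_pow, sub_self]
  rw [this, zero_mul]

noncomputable def phi (n : ℕ) :
    (R[X] ⧸ Ideal.span ({(X : R[X]) ^ n - 1} : Set R[X])) →+*
    (R[X] ⧸ Ideal.span ({(X : R[X]) ^ n - 1} : Set R[X])) :=
  Ideal.Quotient.lift _ (psi n) (psi_ker n)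

lemma phi_mkq (n : ℕ) (g : R[X]) :
    phi n (mkq n g) = eval₂ ((mkq n).comp C) ((mkq n X) ^ (n - 1)) g :=
  rfl

/-- reflect as an additive hom. -/
noncomputable def reflectHom (N : ℕ) : R[X] →+ R[X] where
  toFun := reflect N
  map_zero' := reflect_zero
  map_add' := fun a b => reflect_add a b N

lemma sum_repr (g : R[X]) (N : ℕ) (hg : g.natDegree ≤ N) :
    g = ∑ i ∈ Finset.range (N + 1), C (g.coeff i) * X ^ i := by
  conv_lhs => rw [g.as_sum_range_C_mul_X_pow]
  refine Finset.sum_subset (by simpa using Nat.succ_le_succ hg) ?_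
  intro i _ hi
  simp only [Finset.mem_range, not_lt] at hi
  rw [coeff_eq_zero_of_natDegree_lt hi, map_zero, zero_mul]

lemma key (n N : ℕ) (hn : 0 < n) (g : R[X]) (hg : g.natDegree ≤ N) :
    (mkq n X) ^ N * phi n (mkq n g) = mkq n (g.reflect N) := by
  rw [phi_mkq]
  conv_lhs => rw [sum_repr g N hg]
  rw [show g.reflect N = reflectHom N g from rfl]
  conv_rhs => rw [sum_repr g N hg]
  rw [map_sum, map_sum, eval₂_finset_sum, Finset.mul_sum]
  refine Finset.sum_congr rfl ?_
  intro i hi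
  rw [Finset.mem_range, Nat.lt_succ_iff] at hi
  simp only [reflectHom, AddMonoidHom.coe_mk, ZeroHom.coe_mk, reflect_C_mul_X_pow,
    revAt_le hi, eval₂_mul, eval₂_C, eval₂_X_pow, RingHom.coe_comp, Function.comp_apply,
    map_mul, map_pow]
  have hexp : N + (n - 1) * i = N - i + n * i := by
    have : 1 ≤ n := hn
    cases n with
    | zero => omega
    | succ k => simp only [Nat.succ_sub_one]; ring_nf; omega
  rw [← mul_assoc, mul_comm ((mkq n) X ^ N), mul_assoc, ← pow_mul, ← pow_add, hexp,
    pow_add, pow_mul, mkq_X_pow, one_pow, mul_one]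

lemma rmap_natDegree (f : (ZMod 2)[X]) (hf : f.Monic) : (rmap f).natDegree = f.natDegree :=
  hf.natDegree_map _

lemma rmap_reverse (f : (ZMod 2)[X]) (hf : f.Monic) (hrev : f.reverse = f) :
    (rmap f).reflect (rmap f).natDegree = rmap f := by
  rw [rmap_natDegree f hf]
  unfold rmap
  rw [reflect_map]
  show (f.reverse).map _ = _
  rw [hrev]

lemma phi_rmap (n : ℕ) (hn : 0 < n) (f : (ZMod 2)[X]) (hf : f.Monic) (hrev : f.reverse = f) :
    phi n (mkq n (rmap f)) = (mkq n X) ^ ((n - 1) * f.natDegree) * mkq n (rmap f) := by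
  have h := key n (rmap f).natDegree hn (rmap f) le_rfl
  rw [rmap_reverse f hf hrev, rmap_natDegree f hf] at h
  calc phi n (mkq n (rmap f))
      = (mkq n X) ^ ((n - 1) * f.natDegree) * ((mkq n X) ^ f.natDegree *
          phi n (mkq n (rmap f))) := by
        rw [← mul_assoc, ← pow_add, show (n-1) * f.natDegree + f.natDegree = n * f.natDegree by
          cases n with
          | zero => omega
          | succ k => rw [Nat.succ_sub_one, Nat.succ_mul],
          pow_mul, mkq_X_pow, one_pow, one_mul]
    _ = _ := by rw [h]

lemma phi_C (n : ℕ) (a : R) : phi n (mkq n (C a)) = mkq n (C a) := by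
  rw [phi_mkq, eval₂_C]; rfl


/-- for `n = m·2ˢ` with `m` odd and `s ≥ 1`, and monic `fᵢ | f₀ | (xⁿ-1)` in
`F₂[x]`, if the codeword `α(1 + x + ⋯ + x^{n-1})` belongs to the cyclic code
`⟨f₀, uf₁, u²f₂, u³f₃, u⁴f₄, u⁵f₅⟩` and every `fᵢ` is self-reciprocal, then the code is
reverse-complement. -/
theorem reverseComplement_of_selfReciprocal_even (n m s : ℕ) (hm : Odd m) (hs : 1 ≤ s)
    (hn : n = m * 2 ^ s)
    (f₀ f₁ f₂ f₃ f₄ f₅ : (ZMod 2)[X])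
    (hm₀ : f₀.Monic) (hm₁ : f₁.Monic) (hm₂ : f₂.Monic) (hm₃ : f₃.Monic)
    (hm₄ : f₄.Monic) (hm₅ : f₅.Monic)
    (h1 : f₁ ∣ f₀) (h2 : f₂ ∣ f₀) (h3 : f₃ ∣ f₀) (h4 : f₄ ∣ f₀) (h5 : f₅ ∣ f₀)
    (h0 : f₀ ∣ X ^ n - 1)
    (halpha : (fun _ : Fin n => alpha) ∈ cyclicCode n f₀ f₁ f₂ f₃ f₄ f₅)
    (hs₀ : f₀.reverse = f₀) (hs₁ : f₁.reverse = f₁) (hs₂ : f₂.reverse = f₂)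
    (hs₃ : f₃.reverse = f₃) (hs₄ : f₄.reverse = f₄) (hs₅ : f₅.reverse = f₅) :
    ∀ c ∈ cyclicCode n f₀ f₁ f₂ f₃ f₄ f₅, rcomp c ∈ cyclicCode n f₀ f₁ f₂ f₃ f₄ f₅ := by
  intro c hc
  have hn0 : 0 < n := by
    rcases hm with ⟨k, rfl⟩
    rw [hn]
    exact Nat.mul_pos (by omega) (Nat.pow_pos (by norm_num))
  set I := Ideal.span ({mkq n (rmap f₀), mkq n (Polynomial.C u * rmap f₁),
      mkq n (Polynomial.C (u ^ 2) * rmap f₂), mkq n (Polynomial.C (u ^ 3) * rmap f₃),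
      mkq n (Polynomial.C (u ^ 4) * rmap f₄), mkq n (Polynomial.C (u ^ 5) * rmap f₅)} :
        Set (R[X] ⧸ Ideal.span ({(X : R[X]) ^ n - 1} : Set R[X]))) with hI
  -- φ maps a generator of the form C v * rmap f into I
  have hgen : ∀ (v : R) (f : (ZMod 2)[X]), f.Monic → f.reverse = f →
      mkq n (C v * rmap f) ∈ I → phi n (mkq n (C v * rmap f)) ∈ I := by
    intro v f hf hrev hmem
    rw [map_mul, map_mul, phi_C, phi_rmap n hn0 f hf hrev, ← mul_assoc,
      mul_comm (mkq n (C v)), mul_assoc, ← map_mul]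
    exact Ideal.mul_mem_left _ _ hmem
  -- φ maps I into I
  have hII : ∀ z ∈ I, phi n z ∈ I := by
    intro z hz
    have h1' := Ideal.mem_map_of_mem (phi n) hz
    rw [hI, Ideal.map_span] at h1'
    refine Ideal.span_le.2 ?_ h1'
    rintro y ⟨g, hg, rfl⟩
    simp only [Set.mem_insert_iff, Set.mem_singleton_iff] at hg
    have base : ∀ (v : R) (f : (ZMod 2)[X]), f.Monic → f.reverse = f →
        mkq n (C v * rmap f) ∈ ({mkq n (rmap f₀), mkq n (Polynomial.C u * rmap f₁),
          mkq n (Polynomial.C (u ^ 2) * rmap f₂), mkq n (Polynomial.C (u ^ 3) * rmap f₃),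
          mkq n (Polynomial.C (u ^ 4) * rmap f₄), mkq n (Polynomial.C (u ^ 5) * rmap f₅)} :
          Set _) → phi n (mkq n (C v * rmap f)) ∈ I := fun v f hf hrev hmem =>
      hgen v f hf hrev (Ideal.subset_span hmem)
    rcases hg with h | h | h | h | h | h <;> subst h
    · have : mkq n (rmap f₀) = mkq n (C (1 : R) * rmap f₀) := by rw [map_one, one_mul]
      rw [this]
      exact base 1 f₀ hm₀ hs₀ (by rw [← this]; left; rfl)
    · exact base u f₁ hm₁ hs₁ (by right; left; rfl)
    · exact base (u^2) f₂ hm₂ hs₂ (by right; right; left; rfl)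
    · exact base (u^3) f₃ hm₃ hs₃ (by right; right; right; left; rfl)
    · exact base (u^4) f₄ hm₄ hs₄ (by right; right; right; right; left; rfl)
    · exact base (u^5) f₅ hm₅ hs₅ (by right; right; right; right; right; rfl)
  -- the codeword polynomial
  set p : R[X] := ∑ i : Fin n, C (c i) * X ^ (i : ℕ) with hp
  have hpdeg : p.natDegree ≤ n - 1 := by
    refine (natDegree_sum_le _ _).trans ?_
    rw [Finset.fold_max_le]
    refine ⟨Nat.zero_le _, ?_⟩
    intro i _
    refine (natDegree_C_mul_le _ _).trans ?_
    rw [natDegree_X_pow]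
    omega
  have hvr : ∀ i : Fin n, (i.rev : ℕ) = n - 1 - (i : ℕ) := by
    intro i
    have := Fin.val_rev i
    omega
  have hrefl : p.reflect (n - 1) = ∑ j : Fin n, C (c j.rev) * X ^ (j : ℕ) := by
    have lhs : p.reflect (n - 1) = ∑ i : Fin n, C (c i) * X ^ (n - 1 - (i : ℕ)) := by
      rw [show p.reflect (n-1) = reflectHom (n-1) p from rfl, hp, map_sum]
      refine Finset.sum_congr rfl fun i _ => ?_
      have hle : (i : ℕ) ≤ n - 1 := by omega
      show reflect (n-1) (C (c i) * X ^ (i : ℕ)) = _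
      rw [reflect_C_mul_X_pow, revAt_le hle]
    rw [lhs, ← Equiv.sum_comp (Fin.revPerm : Equiv.Perm (Fin n))
      (fun j => C (c j.rev) * X ^ (j : ℕ))]
    refine Finset.sum_congr rfl fun i _ => ?_
    simp only [Fin.revPerm_apply, Fin.rev_rev, hvr]
  -- split the target polynomial
  have hsplit : (∑ j : Fin n, C (rcomp c j) * X ^ (j : ℕ))
      = (∑ j : Fin n, C (c j.rev) * X ^ (j : ℕ)) + ∑ j : Fin n, C alpha * X ^ (j : ℕ) := by
    rw [← Finset.sum_add_distrib]
    refine Finset.sum_congr rfl fun j _ => ?_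
    rw [rcomp, map_add, add_mul]
  show mkq n (∑ j : Fin n, C (rcomp c j) * X ^ (j : ℕ)) ∈ I
  rw [hsplit, map_add]
  refine Ideal.add_mem _ ?_ ?_
  · rw [← hrefl, ← key n (n-1) hn0 p hpdeg]
    exact Ideal.mul_mem_left _ _ (hII _ hc)
  · exact halpha
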